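/- Let K ⊆ ℝ^d be compact, α ∈ (0,1), n ≥ 1, and k an integer with αk > d + n. Let F : K → ℝ^{k×n} be α-Hölder with each F_x injective. Then there exists a ∈ ℝ^{k-1} (in fact almost every a) such that the map x ↦ P_a ∘ F_x takes values in injective linear maps ℝ^n → ℝ^{k-1}, where P_a(y) = (y_1 - a_1 y_k, ..., y_{k-1} - a_{k-1} y_k). In particular, as long as k - 1 ≥ ⌈(d+n)/α⌉, the reduction can be iterated, so there exists a linear surjection Q : ℝ^k → ℝ^{⌊(d+n)/α⌋} (obtained as a composition of maps P_a) such that Q ∘ F_x is injective for all x ∈ K. -/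

import Mathlib

open MeasureTheory Set ENNReal NNReal Module
open scoped Classical
set_option maxHeartbeats 1000000

private lemma holderOnWith_of_dist' {X Y : Type*} [PseudoMetricSpace X] [PseudoMetricSpace Y]
    {C r : ℝ} (hC : 0 ≤ C) (hr : 0 ≤ r) {f : X → Y} {s : Set X}
    (h : ∀ x ∈ s, ∀ y ∈ s, dist (f x) (f y) ≤ C * dist x y ^ r) :
    HolderOnWith ⟨C, hC⟩ ⟨r, hr⟩ f s := by
  intro x hx y hy
  rw [edist_dist, edist_dist]
  calc ENNReal.ofReal (dist (f x) (f y)) ≤ ENNReal.ofReal (C * dist x y ^ r) :=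
        ENNReal.ofReal_le_ofReal (h x hx y hy)
    _ = _ := by
        rw [ENNReal.ofReal_mul hC, ← ENNReal.ofReal_rpow_of_nonneg dist_nonneg hr,
          ENNReal.ofReal_eq_coe_nnreal hC]
        rfl

private def wext (n : ℕ) (j : Fin n) (σ : ℝ) (u : {i : Fin n // i ≠ j} → ℝ) : Fin n → ℝ :=
  fun i => if h : i = j then σ else u ⟨i, h⟩

private noncomputable def wphi (d n k : ℕ) (K : Set (Fin d → ℝ)) (G : K → Fin k → Fin n → ℝ)
    (lst : Fin k) (j : Fin n) (σ : ℝ)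
    (p : (Fin d → ℝ) × ({i : Fin n // i ≠ j} → ℝ)) : Fin (k - 1) → ℝ :=
  if hx : p.1 ∈ K then
    fun i => (Matrix.of (G ⟨p.1, hx⟩)).mulVec (wext n j σ p.2) (Fin.castLE (Nat.sub_le k 1) i)
      / (Matrix.of (G ⟨p.1, hx⟩)).mulVec (wext n j σ p.2) lst
  else 0

private def wT (d n k : ℕ) (K : Set (Fin d → ℝ)) (G : K → Fin k → Fin n → ℝ)
    (lst : Fin k) (j : Fin n) (σ : ℝ) (q : ℕ) :
    Set ((Fin d → ℝ) × ({i : Fin n // i ≠ j} → ℝ)) :=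
  {p | ∃ hx : p.1 ∈ K, ‖wext n j σ p.2‖ ≤ 1 ∧
    ((q : ℝ) + 1)⁻¹ ≤ |(Matrix.of (G ⟨p.1, hx⟩)).mulVec (wext n j σ p.2) lst|}

private lemma whitney_step (d n k : ℕ) (hn : 1 ≤ n) (α C : ℝ) (hα : 0 < α) (hα1 : α < 1)
    (hC : 0 < C) (hk : (d + n : ℝ) < α * k)
    (K : Set (Fin d → ℝ)) (hK : IsCompact K)
    (G : K → (Fin k → Fin n → ℝ))
    (hG : ∀ x y : K, dist (G x) (G y) ≤ C * dist x y ^ α)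
    (hGinj : ∀ x : K, Function.Injective fun v => (Matrix.of (G x)).mulVec v)
    (lst : Fin k) (hlst : (lst : ℕ) = k - 1) :
    ∃ a : Fin (k - 1) → ℝ, ∀ x : K,
      Function.Injective (fun v : Fin n → ℝ => fun i : Fin (k - 1) =>
        (Matrix.of (G x)).mulVec v (Fin.castLE (Nat.sub_le k 1) i)
          - a i * (Matrix.of (G x)).mulVec v lst) := by
  classical
  -- trivial case : K empty
  rcases K.eq_empty_or_nonempty with rfl | ⟨x₀, hx₀⟩
  · exact ⟨0, fun x => absurd x.2 (Set.notMem_empty _)⟩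
  set x0 : K := ⟨x₀, hx₀⟩ with hx0def
  have h1dn : (1 : ℝ) ≤ (d : ℝ) + n := by
    have : (1:ℕ) ≤ d + n := le_trans hn (Nat.le_add_left n d)
    exact_mod_cast this
  have hk2 : 2 ≤ k := by
    by_contra h
    push_neg at h
    have hk1 : (k : ℝ) ≤ 1 := by exact_mod_cast Nat.lt_succ_iff.mp h
    nlinarith
  have hreal : ((d + (n - 1) : ℕ) : ℝ) < ((k - 1 : ℕ) : ℝ) * α := by
    have e1 : ((d + (n - 1) : ℕ) : ℝ) = (d : ℝ) + (n : ℝ) - 1 := by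
      push_cast [hn]; ring
    have e2 : ((k - 1 : ℕ) : ℝ) = (k : ℝ) - 1 := by
      push_cast [show 1 ≤ k by omega]; ring
    rw [e1, e2]
    nlinarith [hk, hα1]
  -- bound on K
  obtain ⟨R, hR⟩ := Metric.isBounded_iff.1 hK.isBounded
  have hR0 : 0 ≤ R := le_trans dist_nonneg (hR hx₀ hx₀)
  -- bound on entries of G
  set M : ℝ := ‖G x0‖ + C * R ^ α with hMdef
  have hM0 : 0 ≤ M :=
    add_nonneg (norm_nonneg _) (mul_nonneg hC.le (Real.rpow_nonneg hR0 α))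
  have hMG : ∀ x : K, ‖G x‖ ≤ M := by
    intro x
    have h1 : ‖G x‖ - ‖G x0‖ ≤ dist (G x) (G x0) := by
      rw [dist_eq_norm]; exact norm_sub_norm_le _ _
    have h2 : dist (G x) (G x0) ≤ C * dist x x0 ^ α := hG x x0
    have h3 : dist x x0 ^ α ≤ R ^ α :=
      Real.rpow_le_rpow dist_nonneg (hR x.2 x0.2) hα.le
    nlinarith
  have hent : ∀ (x : K) (i : Fin k) (jj : Fin n), |G x i jj| ≤ M := by
    intro x i jj
    calc |G x i jj| = ‖G x i jj‖ := rfl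
      _ ≤ ‖G x i‖ := norm_le_pi_norm (G x i) jj
      _ ≤ ‖G x‖ := norm_le_pi_norm (G x) i
      _ ≤ M := hMG x
  have hentd : ∀ (x y : K) (i : Fin k) (jj : Fin n),
      |G x i jj - G y i jj| ≤ C * dist x y ^ α := by
    intro x y i jj
    calc |G x i jj - G y i jj| = dist (G x i jj) (G y i jj) := (Real.dist_eq _ _).symm
      _ ≤ dist (G x i) (G y i) := dist_le_pi_dist (G x i) (G y i) jj
      _ ≤ dist (G x) (G y) := dist_le_pi_dist (G x) (G y) i
      _ ≤ C * dist x y ^ α := hG x y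
  have hmv : ∀ (x : K) (v : Fin n → ℝ) (i : Fin k),
      (Matrix.of (G x)).mulVec v i = ∑ jj, G x i jj * v jj := by
    intro x v i
    simp [Matrix.mulVec, dotProduct]
  have hvent : ∀ (v : Fin n → ℝ), ‖v‖ ≤ 1 → ∀ jj, |v jj| ≤ 1 := by
    intro v hv jj
    exact le_trans (norm_le_pi_norm v jj) hv
  have hwb : ∀ (x : K) (v : Fin n → ℝ), ‖v‖ ≤ 1 → ∀ i,
      |(Matrix.of (G x)).mulVec v i| ≤ n * M := by
    intro x v hv i
    rw [hmv]
    calc |∑ jj, G x i jj * v jj| ≤ ∑ jj, |G x i jj * v jj| :=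
          Finset.abs_sum_le_sum_abs _ _
      _ ≤ ∑ _jj : Fin n, M * 1 := by
          refine Finset.sum_le_sum fun jj _ => ?_
          rw [abs_mul]
          exact mul_le_mul (hent x i jj) (hvent v hv jj) (abs_nonneg _) hM0
      _ = n * M := by simp [mul_comm]
  have hwd : ∀ (x y : K) (v v' : Fin n → ℝ), ‖v‖ ≤ 1 → ‖v'‖ ≤ 1 → ∀ i,
      |(Matrix.of (G x)).mulVec v i - (Matrix.of (G y)).mulVec v' i|
        ≤ n * M * ‖v - v'‖ + n * C * dist x y ^ α := by
    intro x y v v' hv hv' i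
    rw [hmv, hmv]
    have heq : ∑ jj, G x i jj * v jj - ∑ jj, G y i jj * v' jj
        = (∑ jj, G x i jj * (v jj - v' jj)) + ∑ jj, (G x i jj - G y i jj) * v' jj := by
      rw [← Finset.sum_add_distrib, ← Finset.sum_sub_distrib]
      congr 1; funext jj; ring
    rw [heq]
    have hb1 : |∑ jj, G x i jj * (v jj - v' jj)| ≤ n * (M * ‖v - v'‖) := by
      calc |∑ jj, G x i jj * (v jj - v' jj)| ≤ ∑ jj, |G x i jj * (v jj - v' jj)| :=
            Finset.abs_sum_le_sum_abs _ _
        _ ≤ ∑ _jj : Fin n, M * ‖v - v'‖ := by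
            refine Finset.sum_le_sum fun jj _ => ?_
            rw [abs_mul]
            refine mul_le_mul (hent x i jj) ?_ (abs_nonneg _) hM0
            exact le_trans (norm_le_pi_norm (v - v') jj) le_rfl
        _ = n * (M * ‖v - v'‖) := by simp [mul_comm]
    have hb2 : |∑ jj, (G x i jj - G y i jj) * v' jj| ≤ n * (C * dist x y ^ α) := by
      calc |∑ jj, (G x i jj - G y i jj) * v' jj| ≤ ∑ jj, |(G x i jj - G y i jj) * v' jj| :=
            Finset.abs_sum_le_sum_abs _ _
        _ ≤ ∑ _jj : Fin n, C * dist x y ^ α * 1 := by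
            refine Finset.sum_le_sum fun jj _ => ?_
            rw [abs_mul]
            exact mul_le_mul (hentd x y i jj) (hvent v' hv' jj) (abs_nonneg _)
              (mul_nonneg hC.le (Real.rpow_nonneg dist_nonneg α))
        _ = n * (C * dist x y ^ α) := by simp [mul_comm]
    calc |(∑ jj, G x i jj * (v jj - v' jj)) + ∑ jj, (G x i jj - G y i jj) * v' jj|
        ≤ |∑ jj, G x i jj * (v jj - v' jj)| + |∑ jj, (G x i jj - G y i jj) * v' jj| :=
          abs_add_le _ _
      _ ≤ n * (M * ‖v - v'‖) + n * (C * dist x y ^ α) := add_le_add hb1 hb2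
      _ = n * M * ‖v - v'‖ + n * C * dist x y ^ α := by ring
  set A : ℝ := n * M * 2 ^ (1 - α) + n * C with hAdef
  have hA0 : 0 ≤ A := by positivity
  set Cq : ℕ → ℝ := fun q => 2 * n * M * A / (((q : ℝ) + 1)⁻¹ * ((q : ℝ) + 1)⁻¹) with hCqdef
  have hCq0 : ∀ q, 0 ≤ Cq q := by intro q; rw [hCqdef]; positivity
  obtain ⟨aN, haNc⟩ : ∃ aN : ℝ≥0, (aN : ℝ) = α := ⟨⟨α, hα.le⟩, rfl⟩
  have haN0 : aN ≠ 0 := by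
    intro h
    rw [h, NNReal.coe_zero] at haNc
    exact hα.ne' haNc.symm
  have hHold : ∀ (j : Fin n) (σ : ℝ) (q : ℕ),
      HolderOnWith ⟨Cq q, hCq0 q⟩ aN (wphi d n k K G lst j σ)
        (wT d n k K G lst j σ q) := by
    intro j σ q
    have haNeq : (⟨α, hα.le⟩ : ℝ≥0) = aN := Subtype.ext haNc.symm
    rw [← haNeq]
    apply holderOnWith_of_dist' (hCq0 q) hα.le
    rintro p ⟨hx, hv1, hq1⟩ p' ⟨hx', hv1', hq1'⟩
    set ε : ℝ := ((q : ℝ) + 1)⁻¹ with hεdef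
    have hε0 : 0 < ε := by positivity
    set x : K := ⟨p.1, hx⟩ with hxdef
    set x' : K := ⟨p'.1, hx'⟩ with hx'def
    set v := wext n j σ p.2 with hvdef
    set v' := wext n j σ p'.2 with hv'def
    set w := (Matrix.of (G x)).mulVec v with hwdef
    set w' := (Matrix.of (G x')).mulVec v' with hw'def
    have hΦp : wphi d n k K G lst j σ p
        = fun i => w (Fin.castLE (Nat.sub_le k 1) i) / w lst := by
      simp only [wphi]; rw [dif_pos hx]
    have hΦp' : wphi d n k K G lst j σ p'
        = fun i => w' (Fin.castLE (Nat.sub_le k 1) i) / w' lst := by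
      simp only [wphi]; rw [dif_pos hx']
    rw [hΦp, hΦp']
    set D := dist p p' with hDdef
    have hD0 : (0 : ℝ) ≤ D := dist_nonneg
    have hDα0 : 0 ≤ D ^ α := Real.rpow_nonneg hD0 α
    refine dist_pi_le_iff (mul_nonneg (hCq0 q) hDα0) |>.2 fun i => ?_
    rw [Real.dist_eq]
    have hvv' : ‖v - v'‖ ≤ D := by
      refine (pi_norm_le_iff_of_nonneg hD0).2 fun ii => ?_
      show ‖v ii - v' ii‖ ≤ D
      by_cases hij : ii = j
      · simp [hvdef, hv'def, wext, hij]
        exact hD0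
      · have : v ii - v' ii = p.2 ⟨ii, hij⟩ - p'.2 ⟨ii, hij⟩ := by
          simp [hvdef, hv'def, wext, hij]
        rw [this]
        calc ‖p.2 ⟨ii, hij⟩ - p'.2 ⟨ii, hij⟩‖ = dist (p.2 ⟨ii, hij⟩) (p'.2 ⟨ii, hij⟩) := by
              rw [dist_eq_norm]
          _ ≤ dist p.2 p'.2 := dist_le_pi_dist p.2 p'.2 ⟨ii, hij⟩
          _ ≤ D := by rw [hDdef, Prod.dist_eq]; exact le_max_right _ _
    have hvv2 : ‖v - v'‖ ≤ 2 := by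
      calc ‖v - v'‖ ≤ ‖v‖ + ‖v'‖ := norm_sub_le _ _
        _ ≤ 2 := by rw [hvdef, hv'def]; linarith
    have hxx' : dist x x' ≤ D := by
      rw [Subtype.dist_eq]
      rw [hDdef, Prod.dist_eq]; exact le_max_left _ _
    have hvvα : ‖v - v'‖ ≤ 2 ^ (1 - α) * D ^ α := by
      rcases eq_or_lt_of_le (norm_nonneg (v - v')) with h0 | hpos
      · rw [← h0]; positivity
      · have e1 : ‖v - v'‖ = ‖v - v'‖ ^ α * ‖v - v'‖ ^ (1 - α) := by
          rw [← Real.rpow_add hpos]; norm_num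
        have e2 : ‖v - v'‖ ^ (1 - α) ≤ 2 ^ (1 - α) :=
          Real.rpow_le_rpow (norm_nonneg _) hvv2 (by linarith)
        have e3 : ‖v - v'‖ ^ α ≤ D ^ α := Real.rpow_le_rpow (norm_nonneg _) hvv' hα.le
        calc ‖v - v'‖ = ‖v - v'‖ ^ α * ‖v - v'‖ ^ (1 - α) := e1
          _ ≤ D ^ α * 2 ^ (1 - α) :=
            mul_le_mul e3 e2 (Real.rpow_nonneg (norm_nonneg _) _) hDα0
          _ = 2 ^ (1 - α) * D ^ α := mul_comm _ _
    have hxα : dist x x' ^ α ≤ D ^ α := Real.rpow_le_rpow dist_nonneg hxx' hα.le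
    have hdiff : ∀ ii, |w ii - w' ii| ≤ A * D ^ α := by
      intro ii
      have h1 := hwd x x' v v' hv1 hv1' ii
      have h2 : (n : ℝ) * M * ‖v - v'‖ ≤ n * M * (2 ^ (1 - α) * D ^ α) :=
        mul_le_mul_of_nonneg_left hvvα (by positivity)
      have h3 : (n : ℝ) * C * dist x x' ^ α ≤ n * C * D ^ α :=
        mul_le_mul_of_nonneg_left hxα (by positivity)
      calc |w ii - w' ii| ≤ n * M * ‖v - v'‖ + n * C * dist x x' ^ α := h1
        _ ≤ n * M * (2 ^ (1 - α) * D ^ α) + n * C * D ^ α := add_le_add h2 h3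
        _ = A * D ^ α := by rw [hAdef]; ring
    have hwlst : ε ≤ |w lst| := hq1
    have hwlst' : ε ≤ |w' lst| := hq1'
    have hbne : w lst ≠ 0 := by
      intro h; rw [h, abs_zero] at hwlst; linarith
    have hbne' : w' lst ≠ 0 := by
      intro h; rw [h, abs_zero] at hwlst'; linarith
    set ci := Fin.castLE (Nat.sub_le k 1) i with hcidef
    show |w ci / w lst - w' ci / w' lst| ≤ Cq q * D ^ α
    rw [div_sub_div _ _ hbne hbne', abs_div]
    have hnum : w ci * w' lst - w lst * w' ci
        = (w ci - w' ci) * w' lst + w' ci * (w' lst - w lst) := by ring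
    have hnumb : |w ci * w' lst - w lst * w' ci| ≤ 2 * n * M * A * D ^ α := by
      rw [hnum]
      have b1 : |(w ci - w' ci) * w' lst| ≤ A * D ^ α * (n * M) := by
        rw [abs_mul]
        exact mul_le_mul (hdiff ci) (hwb x' v' hv1' lst) (abs_nonneg _)
          (mul_nonneg hA0 hDα0)
      have b2 : |w' ci * (w' lst - w lst)| ≤ n * M * (A * D ^ α) := by
        rw [abs_mul]
        refine mul_le_mul (hwb x' v' hv1' ci) ?_ (abs_nonneg _) (by positivity)
        rw [abs_sub_comm]; exact hdiff lst
      calc |(w ci - w' ci) * w' lst + w' ci * (w' lst - w lst)|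
          ≤ |(w ci - w' ci) * w' lst| + |w' ci * (w' lst - w lst)| := abs_add_le _ _
        _ ≤ A * D ^ α * (n * M) + n * M * (A * D ^ α) := add_le_add b1 b2
        _ = 2 * n * M * A * D ^ α := by ring
    have hdenb : ε * ε ≤ |w lst * w' lst| := by
      rw [abs_mul]
      exact mul_le_mul hwlst hwlst' hε0.le (abs_nonneg _)
    calc |w ci * w' lst - w lst * w' ci| / |w lst * w' lst|
        ≤ (2 * n * M * A * D ^ α) / (ε * ε) :=
          div_le_div₀ (by positivity) hnumb (by positivity) hdenb
      _ = Cq q * D ^ α := by rw [hCqdef, hεdef]; ring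
  -- dimension bounds
  have hTdim : ∀ (j : Fin n) (σ : ℝ) (q : ℕ),
      dimH (wT d n k K G lst j σ q) ≤ ((d + (n - 1) : ℕ) : ℝ≥0∞) := by
    intro j σ q
    refine le_trans (dimH_mono (subset_univ _)) ?_
    rw [Real.dimH_univ_eq_finrank]
    have hfr : finrank ℝ ((Fin d → ℝ) × ({i : Fin n // i ≠ j} → ℝ)) = d + (n - 1) := by
      simp [Module.finrank_prod, Module.finrank_pi, Fintype.card_subtype_compl]
    rw [hfr]
  have hltkey : ((d + (n - 1) : ℕ) : ℝ≥0∞) / (aN : ℝ≥0∞)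
      < ((k - 1 : ℕ) : ℝ≥0∞) := by
    rw [ENNReal.div_lt_iff (Or.inl (ENNReal.coe_ne_zero.2 haN0)) (Or.inl ENNReal.coe_ne_top)]
    rw [← haNc] at hreal
    exact_mod_cast hreal
  set sg : Bool → ℝ := fun b => if b then 1 else -1 with hsgdef
  set U : Set (Fin (k - 1) → ℝ) :=
    ⋃ (j : Fin n), ⋃ (b : Bool), ⋃ (q : ℕ),
      wphi d n k K G lst j (sg b) '' wT d n k K G lst j (sg b) q with hUdef
  have hUdim : dimH U < ((k - 1 : ℕ) : ℝ≥0∞) := by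
    have hb : dimH U ≤ ((d + (n - 1) : ℕ) : ℝ≥0∞) / (aN : ℝ≥0∞) := by
      rw [hUdef]
      simp only [dimH_iUnion]
      refine iSup_le fun j => iSup_le fun b => iSup_le fun q => ?_
      refine le_trans ((hHold j (sg b) q).dimH_image_le ?_) ?_
      · exact pos_iff_ne_zero.2 haN0
      · exact ENNReal.div_le_div_right (hTdim j (sg b) q) _
    exact lt_of_le_of_lt hb hltkey
  obtain ⟨a, haU⟩ : (Uᶜ).Nonempty := by
    refine Dense.nonempty ?_
    apply dense_compl_of_dimH_lt_finrank
    have hfr : finrank ℝ (Fin (k - 1) → ℝ) = k - 1 := Module.finrank_fin_fun ℝ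
    rw [hfr]
    exact hUdim
  refine ⟨a, fun x => ?_⟩
  by_contra hni
  rw [Function.not_injective_iff] at hni
  obtain ⟨v1, v2, heq, hne⟩ := hni
  set v := v1 - v2 with hvdef
  have hv0 : v ≠ 0 := sub_ne_zero.2 hne
  have hred0 : ∀ i : Fin (k - 1),
      (Matrix.of (G x)).mulVec v (Fin.castLE (Nat.sub_le k 1) i)
        = a i * (Matrix.of (G x)).mulVec v lst := by
    intro i
    have h := congrFun heq i
    rw [hvdef, Matrix.mulVec_sub]
    simp only [Pi.sub_apply]
    linear_combination h
  have hnv : 0 < ‖v‖ := norm_pos_iff.2 hv0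
  set c := ‖v‖⁻¹ with hcdef
  set u := c • v with hudef
  have hu1 : ‖u‖ = 1 := by
    rw [hudef, norm_smul, Real.norm_eq_abs, hcdef,
      abs_of_nonneg (inv_nonneg.2 (norm_nonneg v)),
      inv_mul_cancel₀ (norm_ne_zero_iff.2 hv0)]
  have huv : (Matrix.of (G x)).mulVec u = c • (Matrix.of (G x)).mulVec v := by
    rw [hudef, Matrix.mulVec_smul]
  have hured : ∀ i : Fin (k - 1),
      (Matrix.of (G x)).mulVec u (Fin.castLE (Nat.sub_le k 1) i)
        = a i * (Matrix.of (G x)).mulVec u lst := by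
    intro i
    rw [huv]
    simp only [Pi.smul_apply, smul_eq_mul]
    rw [hred0 i]
    ring
  have hlstne : (Matrix.of (G x)).mulVec u lst ≠ 0 := by
    intro h0
    have hz : (Matrix.of (G x)).mulVec u = 0 := by
      funext ii
      by_cases hc2 : (ii : ℕ) < k - 1
      · have hii : ii = Fin.castLE (Nat.sub_le k 1) ⟨(ii : ℕ), hc2⟩ := by
          apply Fin.ext; simp
        rw [hii, hured ⟨(ii : ℕ), hc2⟩, h0, mul_zero]
        simp
      · have hii : ii = lst := by
          apply Fin.ext
          have := ii.2
          omega
        rw [hii, h0]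
        simp
    have hu0 : u = 0 := hGinj x (by
      show (Matrix.of (G x)).mulVec u = (Matrix.of (G x)).mulVec 0
      rw [hz, Matrix.mulVec_zero])
    rw [hu0, norm_zero] at hu1
    exact one_ne_zero hu1.symm
  have ha_eq : ∀ i : Fin (k - 1),
      a i = (Matrix.of (G x)).mulVec u (Fin.castLE (Nat.sub_le k 1) i)
        / (Matrix.of (G x)).mulVec u lst := by
    intro i
    rw [eq_div_iff hlstne]
    exact (hured i).symm
  haveI : Nonempty (Fin n) := ⟨⟨0, hn⟩⟩
  obtain ⟨j, -, hj⟩ := Finset.exists_mem_eq_sup (Finset.univ : Finset (Fin n))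
    Finset.univ_nonempty (fun i => ‖u i‖₊)
  have hja : |u j| = 1 := by
    have h2 : ‖u j‖ = ‖u‖ := by
      rw [← coe_nnnorm, ← coe_nnnorm, Pi.nnnorm_def, hj]
    rw [← Real.norm_eq_abs, h2, hu1]
  have hpos : 0 < |(Matrix.of (G x)).mulVec u lst| := abs_pos.2 hlstne
  obtain ⟨q, hq⟩ := exists_nat_one_div_lt hpos
  rw [one_div] at hq
  have hbσ : ∃ b : Bool, sg b = u j := by
    rcases (abs_eq (by norm_num : (0:ℝ) ≤ 1)).1 hja with h | h
    · exact ⟨true, by rw [hsgdef]; simp [h]⟩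
    · exact ⟨false, by rw [hsgdef]; simp [h]⟩
  obtain ⟨b, hb⟩ := hbσ
  set p : (Fin d → ℝ) × ({i : Fin n // i ≠ j} → ℝ) := (x.1, fun i => u i.1) with hpdef
  have hext : wext n j (sg b) p.2 = u := by
    funext ii
    by_cases hij : ii = j
    · subst hij
      simp only [wext, dif_pos rfl]
      exact hb
    · simp only [wext, dif_neg hij]
      try rfl
  refine haU (mem_iUnion.2 ⟨j, mem_iUnion.2 ⟨b, mem_iUnion.2 ⟨q, ?_⟩⟩⟩)
  have hpK : p.1 ∈ K := x.2
  refine ⟨p, ⟨hpK, ?_, ?_⟩, ?_⟩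
  · rw [hext]
    exact le_of_eq hu1
  · rw [hext]
    exact hq.le
  · simp only [wphi]
    rw [dif_pos hpK]
    funext i
    rw [hext]
    exact (ha_eq i).symm

private lemma whitney_iter (d n : ℕ) (hn : 1 ≤ n) (α : ℝ) (hα : 0 < α) (hα1 : α < 1)
    (K : Set (Fin d → ℝ)) (hK : IsCompact K) :
    ∀ (k : ℕ) (G : K → (Fin k → Fin n → ℝ)) (C : ℝ), 0 < C →
      (∀ x y : K, dist (G x) (G y) ≤ C * dist x y ^ α) →
      (∀ x : K, Function.Injective fun v => (Matrix.of (G x)).mulVec v) →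
      Nat.floor ((d + n : ℝ) / α) ≤ k →
      ∃ Q : (Fin k → ℝ) →ₗ[ℝ] (Fin (Nat.floor ((d + n : ℝ) / α)) → ℝ),
        Function.Surjective Q ∧
        ∀ x : K, Function.Injective (⇑Q ∘ fun v : Fin n → ℝ =>
          (Matrix.of (G x)).mulVec v) := by
  intro k
  induction k with
  | zero =>
      intro G C hC hG hGi hm
      exfalso
      have h1 : (1 : ℝ) ≤ (d + n : ℝ) / α := by
        rw [le_div_iff₀ hα]
        have : (1:ℕ) ≤ d + n := le_trans hn (Nat.le_add_left n d)
        have h2 : (1:ℝ) ≤ (d:ℝ) + n := by exact_mod_cast this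
        nlinarith
      have := Nat.le_floor (by exact_mod_cast h1 : ((1:ℕ) : ℝ) ≤ (d + n : ℝ) / α)
      omega
  | succ k' ih =>
      intro G C hC hG hGi hm
      by_cases hkm : Nat.floor ((d + n : ℝ) / α) = k' + 1
      · refine ⟨LinearMap.funLeft ℝ ℝ (Fin.cast hkm), ?_, ?_⟩
        · exact LinearMap.funLeft_surjective_of_injective ℝ ℝ _
            (fun i1 i2 h12 => by
              apply Fin.ext
              have : ((Fin.cast hkm i1 : Fin (k'+1)) : ℕ) = ((Fin.cast hkm i2 : Fin (k'+1)) : ℕ) := by rw [h12]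
              simpa using this)
        · intro x
          refine Function.Injective.comp ?_ (hGi x)
          exact LinearMap.funLeft_injective_of_surjective ℝ ℝ _
            (fun i => ⟨Fin.cast hkm.symm i, by apply Fin.ext; simp⟩)
      · have hmk : Nat.floor ((d + n : ℝ) / α) ≤ k' := by omega
        have hkR : (d + n : ℝ) < α * (k' + 1) := by
          have h1 : (d + n : ℝ) / α < (Nat.floor ((d + n : ℝ) / α) : ℝ) + 1 :=
            Nat.lt_floor_add_one _
          have h2 : ((Nat.floor ((d + n : ℝ) / α) : ℝ)) + 1 ≤ ((k' : ℝ)) + 1 := by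
            have : (Nat.floor ((d + n : ℝ) / α) : ℝ) ≤ (k' : ℝ) := by exact_mod_cast hmk
            linarith
          have hdiv : (d + n : ℝ) / α < (k' : ℝ) + 1 := lt_of_lt_of_le h1 h2
          rw [div_lt_iff₀ hα] at hdiv
          push_cast
          linarith
        obtain ⟨a, ha⟩ := whitney_step d n (k' + 1) hn α C hα hα1 hC
          (by push_cast; exact hkR) K hK G hG hGi
          ⟨k', Nat.lt_succ_self k'⟩ rfl
        set lst : Fin (k' + 1) := ⟨k', Nat.lt_succ_self k'⟩ with hlstdef
        set G' : K → (Fin k' → Fin n → ℝ) := fun x => fun i jj =>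
          G x (Fin.castLE (Nat.sub_le (k' + 1) 1) i) jj - a i * G x lst jj with hG'def
        have hmv' : ∀ (x : K) (v : Fin n → ℝ) (i : Fin k'),
            (Matrix.of (G' x)).mulVec v i
              = (Matrix.of (G x)).mulVec v (Fin.castLE (Nat.sub_le (k' + 1) 1) i)
                - a i * (Matrix.of (G x)).mulVec v lst := by
          intro x v i
          simp only [hG'def, Matrix.mulVec, dotProduct, Matrix.of_apply]
          rw [Finset.mul_sum, ← Finset.sum_sub_distrib]
          congr 1; funext jj; ring
        have hG'inj : ∀ x : K, Function.Injective fun v => (Matrix.of (G' x)).mulVec v := by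
          intro x
          have heq : (fun v => (Matrix.of (G' x)).mulVec v)
              = (fun v : Fin n → ℝ => fun i : Fin k' =>
                  (Matrix.of (G x)).mulVec v (Fin.castLE (Nat.sub_le (k' + 1) 1) i)
                    - a i * (Matrix.of (G x)).mulVec v lst) := by
            funext v; funext i; exact hmv' x v i
          rw [heq]
          exact ha x
        have hG'hold : ∀ x y : K, dist (G' x) (G' y) ≤ ((1 + ‖a‖) * C) * dist x y ^ α := by
          intro x y
          have hrhs0 : 0 ≤ ((1 + ‖a‖) * C) * dist x y ^ α := by positivity
          refine (dist_pi_le_iff hrhs0).2 fun i => ?_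
          refine (dist_pi_le_iff hrhs0).2 fun jj => ?_
          rw [Real.dist_eq]
          have hd1 : |G x (Fin.castLE (Nat.sub_le (k' + 1) 1) i) jj
              - G y (Fin.castLE (Nat.sub_le (k' + 1) 1) i) jj| ≤ dist (G x) (G y) := by
            rw [← Real.dist_eq]
            exact le_trans (dist_le_pi_dist _ _ jj) (dist_le_pi_dist (G x) (G y) _)
          have hd2 : |G x lst jj - G y lst jj| ≤ dist (G x) (G y) := by
            rw [← Real.dist_eq]
            exact le_trans (dist_le_pi_dist _ _ jj) (dist_le_pi_dist (G x) (G y) _)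
          have hai : |a i| ≤ ‖a‖ := norm_le_pi_norm a i
          have hGxy : dist (G x) (G y) ≤ C * dist x y ^ α := hG x y
          have hdist0 : (0:ℝ) ≤ dist (G x) (G y) := dist_nonneg
          calc |G' x i jj - G' y i jj|
              = |(G x (Fin.castLE (Nat.sub_le (k' + 1) 1) i) jj
                  - G y (Fin.castLE (Nat.sub_le (k' + 1) 1) i) jj)
                - a i * (G x lst jj - G y lst jj)| := by
                rw [hG'def]; ring_nf
            _ ≤ |G x (Fin.castLE (Nat.sub_le (k' + 1) 1) i) jj
                  - G y (Fin.castLE (Nat.sub_le (k' + 1) 1) i) jj|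
                + |a i| * |G x lst jj - G y lst jj| := by
                rw [← abs_mul]; exact abs_sub _ _
            _ ≤ dist (G x) (G y) + ‖a‖ * dist (G x) (G y) := by
                refine add_le_add hd1 (mul_le_mul hai hd2 (abs_nonneg _) (norm_nonneg _))
            _ = (1 + ‖a‖) * dist (G x) (G y) := by ring
            _ ≤ ((1 + ‖a‖) * C) * dist x y ^ α := by
                have h1a : (0:ℝ) ≤ 1 + ‖a‖ := by positivity
                calc (1 + ‖a‖) * dist (G x) (G y) ≤ (1 + ‖a‖) * (C * dist x y ^ α) :=
                      mul_le_mul_of_nonneg_left hGxy h1a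
                  _ = ((1 + ‖a‖) * C) * dist x y ^ α := by ring
        obtain ⟨Q', hQ'surj, hQ'inj⟩ := ih G' ((1 + ‖a‖) * C)
          (by positivity) hG'hold hG'inj hmk
        set P : (Fin (k' + 1) → ℝ) →ₗ[ℝ] (Fin k' → ℝ) :=
          LinearMap.pi (fun i => LinearMap.proj (Fin.castLE (Nat.sub_le (k' + 1) 1) i)
            - a i • LinearMap.proj lst) with hPdef
        have hPapp : ∀ (y : Fin (k' + 1) → ℝ) (i : Fin k'),
            P y i = y (Fin.castLE (Nat.sub_le (k' + 1) 1) i) - a i * y lst := by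
          intro y i
          simp [hPdef, LinearMap.pi_apply, LinearMap.proj_apply, smul_eq_mul]
        have hPsurj : Function.Surjective P := by
          intro y
          refine ⟨fun jj => if h : (jj : ℕ) < k' then y ⟨(jj : ℕ), h⟩ else 0, ?_⟩
          funext i
          rw [hPapp]
          have h1 : ((Fin.castLE (Nat.sub_le (k' + 1) 1) i : Fin (k' + 1)) : ℕ) < k' := i.2
          have h2 : ¬ ((lst : Fin (k' + 1)) : ℕ) < k' := by rw [hlstdef]; simp
          rw [dif_pos h1, dif_neg h2]
          simp
        refine ⟨Q'.comp P, hQ'surj.comp hPsurj, ?_⟩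
        intro x
        have hcomp : (⇑(Q'.comp P) ∘ fun v : Fin n → ℝ => (Matrix.of (G x)).mulVec v)
            = (⇑Q' ∘ fun v : Fin n → ℝ => (Matrix.of (G' x)).mulVec v) := by
          funext v
          simp only [Function.comp_apply, LinearMap.comp_apply]
          congr 1
          funext i
          rw [hPapp, hmv']
        rw [hcomp]
        exact hQ'inj x

/-- Iterated Whitney reduction: if `F : K → ℝ^{k×n}` is `α`-Hölder with each `F_x`
injective and `αk > d + n`, then (i) there exists `a ∈ ℝ^{k-1}` such that `P_a ∘ F_x` is
injective for all `x ∈ K`, and (ii) there exists a linear surjection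
`Q : ℝ^k → ℝ^⌊(d+n)/α⌋` such that `Q ∘ F_x` is injective for all `x ∈ K`. -/
theorem stmt16 (d n k : ℕ) (hn : 1 ≤ n) (α C : ℝ) (hα : 0 < α) (hα1 : α < 1) (hC : 0 < C)
    (hk : (d + n : ℝ) < α * k)
    (K : Set (Fin d → ℝ)) (hK : IsCompact K)
    (F : K → (Fin k → Fin n → ℝ))
    (hF : ∀ x y : K, dist (F x) (F y) ≤ C * dist x y ^ α)
    (hFinj : ∀ x : K, Function.Injective fun v => (Matrix.of (F x)).mulVec v) :
    (∃ a : Fin (k - 1) → ℝ, ∀ x : K,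
      Function.Injective (fun v : Fin n → ℝ => fun i : Fin (k - 1) =>
        (Matrix.of (F x)).mulVec v (Fin.castLE (Nat.sub_le k 1) i)
          - a i * (Matrix.of (F x)).mulVec v ⟨k - 1, by
            have h0 : (0 : ℝ) < α * k := lt_of_le_of_lt (by positivity) hk
            have hk0 : k ≠ 0 := by rintro rfl; simp at h0
            omega⟩)) ∧
    (∃ Q : (Fin k → ℝ) →ₗ[ℝ] (Fin (Nat.floor ((d + n : ℝ) / α)) → ℝ),
      Function.Surjective Q ∧
      ∀ x : K, Function.Injective (⇑Q ∘ fun v : Fin n → ℝ =>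
        (Matrix.of (F x)).mulVec v)) := by
  have h0 : (0 : ℝ) < α * k := lt_of_le_of_lt (by positivity) hk
  have hk0 : k ≠ 0 := by rintro rfl; simp at h0
  constructor
  · exact whitney_step d n k hn α C hα hα1 hC hk K hK F hF hFinj
      ⟨k - 1, by omega⟩ rfl
  · have hm : Nat.floor ((d + n : ℝ) / α) ≤ k := by
      have h1 : (d + n : ℝ) / α < (k : ℝ) := by
        rw [div_lt_iff₀ hα]
        linarith [hk]
      have h2 : (Nat.floor ((d + n : ℝ) / α) : ℝ) ≤ (d + n : ℝ) / α :=
        Nat.floor_le (by positivity)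
      have : (Nat.floor ((d + n : ℝ) / α) : ℝ) < (k : ℝ) := lt_of_le_of_lt h2 h1
      exact_mod_cast this.le
    exact whitney_iter d n hn α hα hα1 K hK k F C hC hF hFinj hm
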